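/- Let C be a C*-algebra and α : C → C a *-endomorphism. Define the radical R_α as the closure of the union of the kernels ker(α^n) for n ≥ 1. Then an element c ∈ C lies in R_α if and only if lim_n ‖α^n(c)‖ = 0. -/

import Mathlib

open Filter Topology

/-- The radical of a dynamical system `(C, α)`: the closure of the union of the
kernels of the powers `α^n`, `n ≥ 1`. -/
def starRadical {C : Type*} [NormedRing C] [StarRing C] [CStarRing C] [CompleteSpace C]
    [NormedAlgebra ℂ C] [StarModule ℂ C] (α : C →⋆ₐ[ℂ] C) : Set C :=
  closure (⋃ n : ℕ, {x : C | (⇑α)^[n + 1] x = 0})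

private lemma iterate_starAlgHom {C : Type*} [NormedRing C] [StarRing C] [CStarRing C]
    [CompleteSpace C] [NormedAlgebra ℂ C] [StarModule ℂ C] (α : C →⋆ₐ[ℂ] C) (n : ℕ) :
    ∃ β : C →⋆ₐ[ℂ] C, ⇑β = (⇑α)^[n] := by
  induction n with
  | zero => exact ⟨StarAlgHom.id ℂ C, rfl⟩
  | succ n ih =>
    obtain ⟨β, hβ⟩ := ih
    exact ⟨β.comp α, by rw [Function.iterate_succ, ← hβ]; rfl⟩

/-- An element `c` of a C*-algebra lies in the radical
`R_α = closure (⋃ₙ ker α^n)` if and only if `‖α^n(c)‖ → 0`. -/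
theorem mem_starRadical_iff_tendsto_zero
    {C : Type*} [NormedRing C] [StarRing C] [CStarRing C] [CompleteSpace C]
    [NormedAlgebra ℂ C] [StarModule ℂ C] (α : C →⋆ₐ[ℂ] C) (c : C) :
    c ∈ starRadical α ↔
      Tendsto (fun n : ℕ => ‖(⇑α)^[n] c‖) atTop (𝓝 0) := by
  letI : CStarAlgebra C := { ‹NormedRing C›, ‹StarRing C›, ‹CompleteSpace C›, ‹CStarRing C›,
    ‹NormedAlgebra ℂ C›, ‹StarModule ℂ C› with }
  rcases subsingleton_or_nontrivial C with hC | hC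
  · constructor
    · intro _
      have : ∀ n : ℕ, ‖(⇑α)^[n] c‖ = 0 := fun n => by
        rw [Subsingleton.elim ((⇑α)^[n] c) 0, norm_zero]
      simpa [this] using tendsto_const_nhds
    · intro _
      exact subset_closure <| Set.mem_iUnion.mpr ⟨0, Subsingleton.elim _ _⟩
  constructor
  · -- forward direction
    intro hc
    rw [NormedAddCommGroup.tendsto_atTop]
    intro ε hε
    obtain ⟨x, hxS, hxd⟩ := Metric.mem_closure_iff.mp hc ε hε
    obtain ⟨k, hk⟩ := Set.mem_iUnion.mp hxS
    refine ⟨k + 1, fun n hn => ?_⟩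
    have hxn : (⇑α)^[n] x = 0 := by
      obtain ⟨m, rfl⟩ := Nat.exists_eq_add_of_le hn
      rw [add_comm, Function.iterate_add_apply, hk]
      exact Function.iterate_fixed (map_zero α) m
    obtain ⟨β, hβ⟩ := iterate_starAlgHom α n
    rw [sub_zero, Real.norm_eq_abs, abs_of_nonneg (norm_nonneg _)]
    calc ‖(⇑α)^[n] c‖ = ‖β (c - x)‖ := by
          conv_lhs => rw [show (⇑α)^[n] c = (⇑α)^[n] c - (⇑α)^[n] x by rw [hxn, sub_zero]]
          rw [← hβ, map_sub]
      _ ≤ ‖c - x‖ := NonUnitalStarAlgHom.norm_apply_le β _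
      _ < ε := by rwa [← dist_eq_norm]
  · -- backward direction
    intro h
    rw [starRadical, Metric.mem_closure_iff]
    intro ε hε
    -- choose m = n + 1 with ‖α^[m] c‖ < ε / 2
    have h' : Tendsto (fun n : ℕ => ‖(⇑α)^[n + 1] c‖) atTop (𝓝 0) :=
      h.comp (tendsto_add_atTop_nat 1)
    rw [NormedAddCommGroup.tendsto_atTop] at h'
    obtain ⟨N, hN⟩ := h' (ε / 2) (by positivity)
    set m := N + 1 with hm
    set b := (⇑α)^[m] c with hb
    have hbε : ‖b‖ < ε / 2 := by
      have := hN N le_rfl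
      rwa [sub_zero, Real.norm_eq_abs, abs_of_nonneg (norm_nonneg _)] at this
    obtain ⟨β, hβ⟩ := iterate_starAlgHom α m
    have hβcont : Continuous (⇑β) :=
      AddMonoidHomClass.continuous_of_bound β 1
        (fun x => by simpa using NonUnitalStarAlgHom.norm_apply_le β x)
    set δ : ℝ := (ε / 2) ^ 2 with hδ
    have hδpos : (0 : ℝ) < δ := by positivity
    set f : ℝ → ℝ := fun t => max (t - δ) 0 / max t δ with hf
    have hfc : Continuous f := by
      apply Continuous.div
      · exact (continuous_id.sub continuous_const).max continuous_const
      · exact continuous_id.max continuous_const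
      · intro t
        have : δ ≤ max t δ := le_max_right _ _
        linarith
    set g : ℝ → ℝ := fun t => 1 - f t with hg
    have hgc : Continuous g := continuous_const.sub hfc
    set a : C := star c * c with ha
    have haSA : IsSelfAdjoint a := IsSelfAdjoint.star_mul_self c
    set r : C := cfc f a with hr
    have hrSA : IsSelfAdjoint r := cfc_predicate f a
    set x : C := c * r with hx
    -- x is in the kernel of α^[m]
    have hβr : β r = cfc f (β a) := β.map_cfc f a hfc.continuousOn hβcont haSA (haSA.map β)
    have hβa : β a = star b * b := by rw [ha, map_mul, map_star, hβ, ← hb]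
    have hfb : cfc f (star b * b) = 0 := by
      have : (spectrum ℝ (star b * b)).EqOn f (fun _ => 0) := by
        intro t ht
        have ht0 : t ≤ ‖star b * b‖ := by
          calc t ≤ |t| := le_abs_self t
            _ = ‖t‖ := rfl
            _ ≤ ‖star b * b‖ := spectrum.norm_le_norm_of_mem ht
        have : t ≤ δ := by
          rw [CStarRing.norm_star_mul_self] at ht0
          have h1 : ‖b‖ * ‖b‖ ≤ (ε / 2) * (ε / 2) := by
            apply mul_le_mul hbε.le hbε.le (norm_nonneg _) (by positivity)
          rw [hδ]; nlinarith
        simp only [hf]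
        rw [max_eq_right (by linarith), zero_div]
      rw [cfc_congr this]
      exact cfc_const_zero ℝ _
    have hker : (⇑α)^[m] x = 0 := by
      rw [← hβ, hx, map_mul, hβr, hβa, hfb, mul_zero]
    -- x is close to c
    have h1r : 1 - r = cfc g a := by
      rw [hg, hr]
      rw [cfc_sub (fun _ => (1 : ℝ)) f a continuous_const.continuousOn hfc.continuousOn]
      rw [cfc_const 1 a haSA, map_one]
    have hmid : cfc (fun t => t * g t) a = a * cfc g a := by
      rw [cfc_mul (fun t : ℝ => t) g a (continuous_id'.continuousOn) hgc.continuousOn, cfc_id' ℝ a haSA]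
    have hkey : star (c - x) * (c - x) = cfc (fun t => g t * (t * g t)) a := by
      have e1 : c - x = c * (1 - r) := by rw [hx, mul_one_sub]
      rw [e1, star_mul, star_sub, star_one, hrSA.star_eq]
      calc (1 - r) * star c * (c * (1 - r))
          = (1 - r) * (a * (1 - r)) := by rw [ha]; noncomm_ring
        _ = cfc g a * cfc (fun t => t * g t) a := by rw [h1r, hmid]
        _ = cfc (fun t => g t * (t * g t)) a :=
            (cfc_mul _ _ a hgc.continuousOn (continuous_id.mul hgc).continuousOn).symm
    have hbound : ‖star (c - x) * (c - x)‖ ≤ δ := by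
      rw [hkey]
      apply norm_cfc_le hδpos.le
      intro t ht
      have ht0 : 0 ≤ t := spectrum_star_mul_self_nonneg t ht
      rcases le_or_gt t δ with htδ | htδ
      · have hft : f t = 0 := by
          simp only [hf]
          rw [max_eq_right (by linarith), zero_div]
        simp only [hg, hft, sub_zero, one_mul, mul_one]
        rw [Real.norm_eq_abs, abs_of_nonneg ht0]
        exact htδ
      · have hmax1 : max (t - δ) 0 = t - δ := max_eq_left (by linarith)
        have hmax2 : max t δ = t := max_eq_left htδ.le
        have hft : f t = (t - δ) / t := by simp only [hf, hmax1, hmax2]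
        have htpos : 0 < t := lt_trans hδpos htδ
        have hgt : g t = δ / t := by
          show 1 - f t = δ / t
          rw [hft]
          field_simp
          ring
        rw [hgt, Real.norm_eq_abs]
        have : δ / t * (t * (δ / t)) = δ * (δ / t) := by
          field_simp
        rw [this, abs_of_nonneg (by positivity)]
        calc δ * (δ / t) ≤ δ * 1 := by
              apply mul_le_mul_of_nonneg_left _ hδpos.le
              rw [div_le_one htpos]
              exact htδ.le
          _ = δ := mul_one δ
    have hclose : ‖c - x‖ ≤ ε / 2 := by
      have := CStarRing.norm_star_mul_self (x := c - x)
      have h2 : ‖c - x‖ * ‖c - x‖ ≤ (ε / 2) * (ε / 2) := by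
        rw [← this]; rw [hδ] at hbound; nlinarith [hbound]
      nlinarith [norm_nonneg (c - x), hε]
    refine ⟨x, Set.mem_iUnion.mpr ⟨N, ?_⟩, ?_⟩
    · simpa [hm] using hker
    · rw [dist_eq_norm]
      linarith
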